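/- Let q = 2^h with h ≥ 1, let I = {i_0,...,i_{m-k-1}} and J = {j_0,...,j_{k-1}} partition {0,1,...,m-1}, and write x = (x_{j_0},...,x_{j_{k-1}}). Let a : Z_2^m → Z_{2^h} be of the form a = Σ_{α=0}^{m-k-1} x_{i_α}·g_α(x_{j_0},...,x_{j_{k-1}}) + g'(x_{j_0},...,x_{j_{k-1}}), where g_0,...,g_{m-k-1}, g' : Z_2^k → Z_{2^h} are arbitrary, and let b = 2^{h-1}·Σ_{d=0}^{2^k-1} Σ_{α=0}^{m-k-2} x_{π_d(α)} x_{π_d(α+1)} · Π_{β=0}^{k-1} x_{j_β}^{d_β}(1 - x_{j_β})^{1-d_β}, where π_0,...,π_{2^k-1} are bijections from {0,...,m-k-1} onto I and (d_0,...,d_{k-1}) is the binary expansion of d. Then the polyphase vector associated with a + b has PMEPR at most 2^{k+1}: sup_{0 ≤ t < T} |Σ_{i=0}^{2^m-1} ξ^{(a+b)_i} e^{2π√(-1)(f_c + i/T)t}|² ≤ 2^{k+1}·2^m, where ξ = e^{2π√(-1)/2^h}. -/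

import Mathlib

open Finset

/-- The binary expansion of `i`, as a point of `ℤ₂^m`. -/
def bits (m : ℕ) (i : ℕ) : Fin m → ZMod 2 := fun j => if Nat.testBit i j.val then 1 else 0

/-- The polyphase vector `F = ξ^f` associated with `f : ℤ₂^m → ℤ_q`, `ξ = e^{2π√-1/q}`. -/
noncomputable def polyVec {q : ℕ} (m : ℕ) (f : (Fin m → ZMod 2) → ZMod q) : ℕ → ℂ :=
  fun i => Complex.exp (2 * Real.pi * Complex.I * ((f (bits m i)).val : ℂ) / (q : ℂ))

/-- The function `a = ∑_α x_{i_α}·g_α(x_{j_0},…,x_{j_{k-1}}) + g'(x_{j_0},…,x_{j_{k-1}})`. -/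
def aFun (h m k : ℕ) (iI : ℕ → Fin m) (jJ : Fin k → Fin m)
    (g : ℕ → (Fin k → ZMod 2) → ZMod (2 ^ h)) (g' : (Fin k → ZMod 2) → ZMod (2 ^ h))
    (y : Fin m → ZMod 2) : ZMod (2 ^ h) :=
  (∑ α ∈ Finset.range (m - k), ((y (iI α)).val : ZMod (2 ^ h)) * g α (fun b => y (jJ b)))
    + g' (fun b => y (jJ b))

/-- The function
`b = 2^{h-1}·∑_{d∈ℤ₂^k} ∑_{α} x_{π_d(α)}x_{π_d(α+1)} ∏_β x_{j_β}^{d_β}(1-x_{j_β})^{1-d_β}`,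
computed in `ℕ` and cast into `ℤ_{2^h}`. -/
def bFun (h m k : ℕ) (jJ : Fin k → Fin m) (π : (Fin k → ZMod 2) → ℕ → Fin m)
    (y : Fin m → ZMod 2) : ZMod (2 ^ h) :=
  ((2 ^ (h - 1) * ∑ d : Fin k → ZMod 2,
      (∑ α ∈ Finset.range (m - k - 1), (y (π d α)).val * (y (π d (α + 1))).val)
        * ∏ b : Fin k, (y (jJ b)).val ^ (d b).val * (1 - (y (jJ b)).val) ^ (1 - (d b).val)
    : ℕ) : ZMod (2 ^ h))

namespace Stmt10Aux

noncomputable def ph (q : ℕ) (x : ZMod q) : ℂ :=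
  Complex.exp (2 * Real.pi * Complex.I * (x.val : ℂ) / (q : ℂ))

lemma ph_eq (q : ℕ) (x : ZMod q) :
    ph q x = Complex.exp (((2 * Real.pi * x.val / q : ℝ) : ℂ) * Complex.I) := by
  unfold ph; congr 1; push_cast; ring

lemma abs_ph (q : ℕ) (x : ZMod q) : ‖ph q x‖ = 1 := by
  rw [ph_eq]; exact Complex.norm_exp_ofReal_mul_I _

lemma ph_pow (q : ℕ) (x : ZMod q) :
    ph q x = Complex.exp (2 * Real.pi * Complex.I / q) ^ x.val := by
  rw [← Complex.exp_nat_mul]; unfold ph; congr 1; ring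

lemma zeta_pow_mod (q : ℕ) (hq : q ≠ 0) (a : ℕ) :
    Complex.exp (2 * Real.pi * Complex.I / q) ^ (a % q) =
      Complex.exp (2 * Real.pi * Complex.I / q) ^ a := by
  have hq' : (q : ℂ) ≠ 0 := Nat.cast_ne_zero.2 hq
  have h1 : Complex.exp (2 * Real.pi * Complex.I / q) ^ q = 1 := by
    rw [← Complex.exp_nat_mul,
      show (q : ℂ) * (2 * Real.pi * Complex.I / q) = 2 * Real.pi * Complex.I by
        field_simp]
    exact Complex.exp_two_pi_mul_I
  conv_rhs => rw [← Nat.div_add_mod a q]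
  rw [pow_add, pow_mul, h1, one_pow, one_mul]

lemma ph_add (q : ℕ) (hq : q ≠ 0) (x y : ZMod q) :
    ph q (x + y) = ph q x * ph q y := by
  haveI : NeZero q := ⟨hq⟩
  rw [ph_pow, ph_pow, ph_pow, ← pow_add, ZMod.val_add, zeta_pow_mod q hq]

lemma ph_zero (q : ℕ) (hq : q ≠ 0) : ph q 0 = 1 := by
  haveI : NeZero q := ⟨hq⟩
  unfold ph
  rw [ZMod.val_zero]
  simp

lemma ph_half (h : ℕ) (hh : 1 ≤ h) :
    ph (2 ^ h) (((2 ^ (h - 1) : ℕ) : ZMod (2 ^ h))) = -1 := by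
  haveI : NeZero (2 ^ h) := ⟨pow_ne_zero _ two_ne_zero⟩
  have hlt : 2 ^ (h - 1) < 2 ^ h := Nat.pow_lt_pow_right one_lt_two (by omega)
  have hv : (((2 ^ (h - 1) : ℕ) : ZMod (2 ^ h))).val = 2 ^ (h - 1) :=
    ZMod.val_cast_of_lt hlt
  unfold ph
  rw [hv]
  have h2 : ((2 ^ h : ℕ) : ℂ) = 2 * ((2 ^ (h - 1) : ℕ) : ℂ) := by
    rw [show h = (h - 1) + 1 by omega, pow_succ]
    push_cast; ring
  have hne : ((2 ^ (h - 1) : ℕ) : ℂ) ≠ 0 := by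
    exact_mod_cast Nat.cast_ne_zero.2 (pow_ne_zero _ two_ne_zero)
  rw [show 2 * (Real.pi : ℂ) * Complex.I * ((2 ^ (h - 1) : ℕ) : ℂ) / ((2 ^ h : ℕ) : ℂ)
      = (Real.pi : ℂ) * Complex.I by rw [h2]; field_simp]
  exact Complex.exp_pi_mul_I

def uext (n : ℕ) (u : Fin n → ZMod 2) (j : ℕ) : ℕ :=
  if h : j < n then (u ⟨j, h⟩).val else 0

def gQ (n : ℕ) (u : Fin n → ZMod 2) : ℕ :=
  ∑ j ∈ Finset.range (n - 1), uext n u j * uext n u (j + 1)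

noncomputable def S (h n : ℕ) (ε : ℕ → ℂ) (c : ℕ → ZMod (2 ^ h)) : ℂ :=
  ∑ u : Fin n → ZMod 2,
    ph (2 ^ h) (((2 ^ (h - 1) * gQ n u : ℕ) : ZMod (2 ^ h))
        + ∑ j ∈ Finset.range n, ((uext n u j : ZMod (2 ^ h)) * c j))
      * ∏ j ∈ Finset.range n, ε j ^ uext n u j

def flip0 (h : ℕ) (c : ℕ → ZMod (2 ^ h)) : ℕ → ZMod (2 ^ h) :=
  fun j => if j = 0 then c 0 + ((2 ^ (h - 1) : ℕ) : ZMod (2 ^ h)) else c j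

lemma uext_cons_zero (n : ℕ) (v : ZMod 2) (u : Fin n → ZMod 2) :
    uext (n + 1) (Fin.cons v u) 0 = v.val := by
  rw [uext, dif_pos (Nat.succ_pos n)]
  rfl

lemma uext_cons_succ (n : ℕ) (v : ZMod 2) (u : Fin n → ZMod 2) (j : ℕ) :
    uext (n + 1) (Fin.cons v u) (j + 1) = uext n u j := by
  unfold uext
  by_cases hj : j < n
  · rw [dif_pos (by omega : j + 1 < n + 1), dif_pos hj]
    have h1 : (⟨j + 1, by omega⟩ : Fin (n + 1)) = (⟨j, hj⟩ : Fin n).succ := rfl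
    rw [h1, Fin.cons_succ]
  · rw [dif_neg (by omega), dif_neg hj]

lemma gQ_cons (n : ℕ) (v : ZMod 2) (u : Fin n → ZMod 2) :
    gQ (n + 1) (Fin.cons v u) = v.val * uext n u 0 + gQ n u := by
  cases n with
  | zero => simp [gQ, uext]
  | succ n =>
    show ∑ j ∈ Finset.range (n + 1), _ = _
    rw [Finset.sum_range_succ']
    simp only [uext_cons_succ, uext_cons_zero]
    rw [add_comm]
    rfl

lemma lin_cons (h n : ℕ) (v : ZMod 2) (u : Fin n → ZMod 2) (c : ℕ → ZMod (2 ^ h)) :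
    ∑ j ∈ Finset.range (n + 1), ((uext (n + 1) (Fin.cons v u) j : ZMod (2 ^ h)) * c j)
      = (v.val : ZMod (2 ^ h)) * c 0
        + ∑ j ∈ Finset.range n, ((uext n u j : ZMod (2 ^ h)) * c (j + 1)) := by
  rw [Finset.sum_range_succ']
  simp only [uext_cons_succ, uext_cons_zero]
  exact add_comm _ _

lemma prod_cons (n : ℕ) (v : ZMod 2) (u : Fin n → ZMod 2) (ε : ℕ → ℂ) :
    ∏ j ∈ Finset.range (n + 1), ε j ^ uext (n + 1) (Fin.cons v u) j
      = ε 0 ^ v.val * ∏ j ∈ Finset.range n, ε (j + 1) ^ uext n u j := by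
  rw [Finset.prod_range_succ']
  simp only [uext_cons_succ, uext_cons_zero]
  exact mul_comm _ _

lemma sum_pi_succ {M : Type*} [AddCommMonoid M] (n : ℕ) (f : (Fin (n + 1) → ZMod 2) → M) :
    ∑ u : Fin (n + 1) → ZMod 2, f u
      = ∑ v : ZMod 2, ∑ u : Fin n → ZMod 2, f (Fin.cons v u) := by
  calc ∑ u : Fin (n + 1) → ZMod 2, f u
      = ∑ p : ZMod 2 × (Fin n → ZMod 2), f (Fin.cons p.1 p.2) :=
        (Fintype.sum_equiv (Fin.consEquiv (fun _ => ZMod 2)) (fun p => f (Fin.cons p.1 p.2))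
          f (fun p => rfl)).symm
    _ = ∑ v : ZMod 2, ∑ u : Fin n → ZMod 2, f (Fin.cons v u) := Fintype.sum_prod_type _

lemma sum_zmod_two {M : Type*} [AddCommMonoid M] (f : ZMod 2 → M) :
    ∑ v : ZMod 2, f v = f 0 + f 1 := by
  rw [show (univ : Finset (ZMod 2)) = {0, 1} from by decide]
  rw [Finset.sum_insert (by decide), Finset.sum_singleton]

lemma L1 (h n : ℕ) (u : Fin n → ZMod 2) (c : ℕ → ZMod (2 ^ h)) :
    ∑ j ∈ Finset.range n, ((uext n u j : ZMod (2 ^ h)) * flip0 h c j)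
      = (∑ j ∈ Finset.range n, ((uext n u j : ZMod (2 ^ h)) * c j))
        + (uext n u 0 : ZMod (2 ^ h)) * ((2 ^ (h - 1) : ℕ) : ZMod (2 ^ h)) := by
  cases n with
  | zero => simp [uext, flip0]
  | succ n =>
    rw [Finset.sum_range_succ',
      Finset.sum_range_succ' (fun j => ((uext (n + 1) u j : ZMod (2 ^ h)) * c j))]
    simp only [flip0, Nat.succ_ne_zero, if_false, if_true]
    ring

set_option maxHeartbeats 1000000 in
lemma S_succ (h : ℕ) (hq : (2 ^ h : ℕ) ≠ 0) (n : ℕ) (ε : ℕ → ℂ) (c : ℕ → ZMod (2 ^ h)) :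
    S h (n + 1) ε c
      = S h n (fun j => ε (j + 1)) (fun j => c (j + 1))
        + ph (2 ^ h) (c 0) * ε 0
            * S h n (fun j => ε (j + 1)) (flip0 h (fun j => c (j + 1))) := by
  unfold S
  rw [sum_pi_succ (M := ℂ) n, sum_zmod_two]
  congr 1
  · apply Finset.sum_congr rfl
    intro u _
    rw [gQ_cons, lin_cons, prod_cons]
    norm_num [show (0 : ZMod 2).val = 0 from rfl]
  · rw [Finset.mul_sum]
    apply Finset.sum_congr rfl
    intro u _
    rw [gQ_cons, lin_cons, prod_cons]
    have hval1 : (1 : ZMod 2).val = 1 := rfl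
    rw [hval1]
    have hexp : ((2 ^ (h - 1) * (1 * uext n u 0 + gQ n u) : ℕ) : ZMod (2 ^ h))
          + (((1 : ℕ) : ZMod (2 ^ h)) * c 0
            + ∑ j ∈ Finset.range n, ((uext n u j : ZMod (2 ^ h)) * c (j + 1)))
        = (((2 ^ (h - 1) * gQ n u : ℕ) : ZMod (2 ^ h))
            + ∑ j ∈ Finset.range n,
                ((uext n u j : ZMod (2 ^ h)) * flip0 h (fun j => c (j + 1)) j))
          + c 0 := by
      rw [L1]
      push_cast
      ring
    rw [hexp, ph_add _ hq]
    ring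

lemma golay (h : ℕ) (hh : 1 ≤ h) (n : ℕ) :
    ∀ (ε : ℕ → ℂ) (c : ℕ → ZMod (2 ^ h)), (∀ j, ‖ε j‖ = 1) →
      ‖S h n ε c‖ ^ 2 + ‖S h n ε (flip0 h c)‖ ^ 2 = 2 ^ (n + 1) := by
  have hq : (2 ^ h : ℕ) ≠ 0 := pow_ne_zero _ two_ne_zero
  induction n with
  | zero =>
    intro ε c _
    have h0 : ∀ c : ℕ → ZMod (2 ^ h), S h 0 ε c = 1 := by
      intro c
      unfold S
      rw [Fintype.sum_eq_single (fun i : Fin 0 => (0 : ZMod 2))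
        (fun u hu => absurd (funext fun i => i.elim0) hu)]
      simp [gQ, ph_zero _ hq]
    rw [h0, h0]
    norm_num
  | succ n ih =>
    intro ε c hε
    rw [S_succ h hq, S_succ h hq]
    have e1 : (fun j => flip0 h c (j + 1)) = (fun j => c (j + 1)) :=
      funext fun j => if_neg (Nat.succ_ne_zero j)
    rw [e1]
    have e2 : flip0 h c 0 = c 0 + ((2 ^ (h - 1) : ℕ) : ZMod (2 ^ h)) := if_pos rfl
    rw [e2, ph_add _ hq, ph_half h hh]
    set A := S h n (fun j => ε (j + 1)) (fun j => c (j + 1)) with hA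
    set B := S h n (fun j => ε (j + 1)) (flip0 h (fun j => c (j + 1))) with hB
    have ihh := ih (fun j => ε (j + 1)) (fun j => c (j + 1)) (fun j => hε (j + 1))
    rw [← hA, ← hB] at ihh
    have hpar : ∀ X Y : ℂ, ‖X + Y‖ ^ 2 + ‖X - Y‖ ^ 2
        = 2 * (‖X‖ ^ 2 + ‖Y‖ ^ 2) := by
      intro X Y
      rw [Complex.sq_norm, Complex.sq_norm, Complex.sq_norm, Complex.sq_norm]
      simp [Complex.normSq_apply, Complex.add_re, Complex.add_im, Complex.sub_re,
        Complex.sub_im]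
      ring
    have habsY : ‖ph (2 ^ h) (c 0) * ε 0 * B‖ = ‖B‖ := by
      rw [norm_mul, norm_mul, abs_ph, hε 0, one_mul, one_mul]
    have hthis := hpar A (ph (2 ^ h) (c 0) * ε 0 * B)
    rw [show A + ph (2 ^ h) (c 0) * -1 * ε 0 * B = A - ph (2 ^ h) (c 0) * ε 0 * B by ring]
    rw [hthis, habsY, ihh]
    ring

lemma golay_bound (h : ℕ) (hh : 1 ≤ h) (n : ℕ) (ε : ℕ → ℂ) (c : ℕ → ZMod (2 ^ h))
    (hε : ∀ j, ‖ε j‖ = 1) :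
    ‖S h n ε c‖ ≤ Real.sqrt (2 ^ (n + 1)) := by
  have hg := golay h hh n ε c hε
  have h1 : ‖S h n ε c‖ ^ 2 ≤ 2 ^ (n + 1) := by
    nlinarith [sq_nonneg (‖S h n ε (flip0 h c)‖)]
  have h2 : ‖S h n ε c‖ = Real.sqrt (‖S h n ε c‖ ^ 2) := by
    rw [Real.sqrt_sq (norm_nonneg _)]
  rw [h2]
  exact Real.sqrt_le_sqrt h1

lemma sum_bits_eq (m i : ℕ) :
    ∑ j ∈ Finset.range m, (if Nat.testBit i j then 1 else 0) * 2 ^ j = i % 2 ^ m := by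
  induction m with
  | zero => simp [Nat.mod_one]
  | succ m ih =>
    rw [Finset.sum_range_succ, ih, Nat.mod_pow_succ]
    have ht : Nat.testBit i m = decide (i / 2 ^ m % 2 = 1) := Nat.testBit_eq_decide_div_mod_eq
    have h2 : i / 2 ^ m % 2 < 2 := Nat.mod_lt _ (by norm_num)
    interval_cases h : i / 2 ^ m % 2 <;> simp [ht, h]

lemma enc_bits (m i : ℕ) (hi : i < 2 ^ m) :
    ∑ v : Fin m, (bits m i v).val * 2 ^ (v : ℕ) = i := by
  have hval : ∀ v : Fin m, (bits m i v).val = if Nat.testBit i v.val then 1 else 0 := by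
    intro v
    unfold bits
    split <;> rfl
  calc ∑ v : Fin m, (bits m i v).val * 2 ^ (v : ℕ)
      = ∑ j ∈ Finset.range m, (if Nat.testBit i j then 1 else 0) * 2 ^ j := by
        rw [← Fin.sum_univ_eq_sum_range (fun j => (if Nat.testBit i j then 1 else 0) * 2 ^ j) m]
        apply Finset.sum_congr rfl; intro v _; rw [hval]
    _ = i := by rw [sum_bits_eq]; exact Nat.mod_eq_of_lt hi

end Stmt10Aux

open Stmt10Aux in
/-- The polyphase vector associated with `a + b` has PMEPR at most `2^{k+1}`:
its envelope power never exceeds `2^{k+1}·2^m`. -/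
theorem stmt_10 (h m k : ℕ) (hh : 1 ≤ h) (hkm : k ≤ m)
    (iI : ℕ → Fin m) (jJ : Fin k → Fin m)
    (hiInj : Set.InjOn iI (Set.Iio (m - k))) (hjInj : Function.Injective jJ)
    (hdisj : ∀ a < m - k, ∀ b : Fin k, iI a ≠ jJ b)
    (hcover : ∀ v : Fin m, (∃ a < m - k, iI a = v) ∨ ∃ b : Fin k, jJ b = v)
    (g : ℕ → (Fin k → ZMod 2) → ZMod (2 ^ h)) (g' : (Fin k → ZMod 2) → ZMod (2 ^ h))
    (π : (Fin k → ZMod 2) → ℕ → Fin m)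
    (hπInj : ∀ d, Set.InjOn (π d) (Set.Iio (m - k)))
    (hπrange : ∀ d, (π d) '' Set.Iio (m - k) = iI '' Set.Iio (m - k))
    (fc T t : ℝ) (hT : 0 < T) (ht0 : 0 ≤ t) (htT : t < T) :
    ‖∑ i ∈ Finset.range (2 ^ m),
        polyVec m (fun y => aFun h m k iI jJ g g' y + bFun h m k jJ π y) i *
          Complex.exp (2 * Real.pi * Complex.I * ((fc : ℂ) + (i : ℂ) / (T : ℂ)) * (t : ℂ))‖ ^ 2
      ≤ (2 : ℝ) ^ (k + 1) * (2 : ℝ) ^ m := by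
  classical
  have hq : (2 ^ h : ℕ) ≠ 0 := pow_ne_zero _ two_ne_zero
  haveI : NeZero (2 ^ h : ℕ) := ⟨hq⟩
  set F : (Fin m → ZMod 2) → ZMod (2 ^ h) :=
    fun y => aFun h m k iI jJ g g' y + bFun h m k jJ π y with hF
  set z : ℂ := Complex.exp (2 * Real.pi * Complex.I * t / T) with hzdef
  set K : ℂ := Complex.exp (2 * Real.pi * Complex.I * fc * t) with hKdef
  have habsz : ‖z‖ = 1 := by
    rw [hzdef, show 2 * (Real.pi : ℂ) * Complex.I * t / T
        = ((2 * Real.pi * t / T : ℝ) : ℂ) * Complex.I by push_cast; ring]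
    exact Complex.norm_exp_ofReal_mul_I _
  have habsK : ‖K‖ = 1 := by
    rw [hKdef, show 2 * (Real.pi : ℂ) * Complex.I * fc * t
        = ((2 * Real.pi * fc * t : ℝ) : ℂ) * Complex.I by push_cast; ring]
    exact Complex.norm_exp_ofReal_mul_I _
  -- the correspondence τ between the enumerations iI and π d of the index set I
  have τex : ∀ (d : Fin k → ZMod 2) (α : ℕ), ∃ β, α < m - k → (β < m - k ∧ iI β = π d α) := by
    intro d α
    by_cases hα : α < m - k
    · have hmem : π d α ∈ iI '' Set.Iio (m - k) := by
        rw [← hπrange d]; exact ⟨α, hα, rfl⟩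
      obtain ⟨β, hβ, he⟩ := hmem
      exact ⟨β, fun _ => ⟨hβ, he⟩⟩
    · exact ⟨0, fun hc => absurd hc hα⟩
  choose τ hτ using τex
  have hτlt : ∀ d α, α < m - k → τ d α < m - k := fun d α hα => (hτ d α hα).1
  have hτeq : ∀ d α, α < m - k → iI (τ d α) = π d α := fun d α hα => (hτ d α hα).2
  have hτinj : ∀ d, ∀ a ∈ Finset.range (m - k), ∀ b ∈ Finset.range (m - k),
      τ d a = τ d b → a = b := by
    intro d a ha b hb hab
    have h1 : π d a = π d b := by
      rw [← hτeq d a (mem_range.1 ha), ← hτeq d b (mem_range.1 hb), hab]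
    exact hπInj d (Set.mem_Iio.2 (mem_range.1 ha)) (Set.mem_Iio.2 (mem_range.1 hb)) h1
  have hτsurj : ∀ d, ∀ β ∈ Finset.range (m - k), ∃ α, ∃ _ : α ∈ Finset.range (m - k),
      τ d α = β := by
    intro d β hβ
    have hmem : iI β ∈ π d '' Set.Iio (m - k) := by
      rw [hπrange d]; exact ⟨β, mem_range.1 hβ, rfl⟩
    obtain ⟨α, hα, he⟩ := hmem
    refine ⟨α, mem_range.2 hα, ?_⟩
    apply hiInj (Set.mem_Iio.2 (hτlt d α hα)) (Set.mem_Iio.2 (mem_range.1 hβ))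
    rw [hτeq d α hα, he]
  -- step 1 : peel off the carrier and write the sample as powers of z
  have step1 : ∀ i : ℕ,
      polyVec m F i
          * Complex.exp (2 * Real.pi * Complex.I * ((fc : ℂ) + (i : ℂ) / (T : ℂ)) * (t : ℂ))
        = K * (ph (2 ^ h) (F (bits m i)) * z ^ i) := by
    intro i
    have h1 : polyVec m F i = ph (2 ^ h) (F (bits m i)) := rfl
    have h2 : Complex.exp (2 * Real.pi * Complex.I * ((fc : ℂ) + (i : ℂ) / (T : ℂ)) * (t : ℂ))
        = K * z ^ i := by
      rw [hKdef, hzdef, ← Complex.exp_nat_mul, ← Complex.exp_add]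
      congr 1
      ring
    rw [h1, h2]; ring
  have sum1 : (∑ i ∈ Finset.range (2 ^ m), polyVec m F i *
        Complex.exp (2 * Real.pi * Complex.I * ((fc : ℂ) + (i : ℂ) / (T : ℂ)) * (t : ℂ)))
      = K * ∑ i ∈ Finset.range (2 ^ m), ph (2 ^ h) (F (bits m i)) * z ^ i := by
    rw [Finset.mul_sum]; exact Finset.sum_congr rfl fun i _ => step1 i
  -- step 2 : reindex by points of the hypercube
  have hbits_bij : Function.Bijective (fun i : Fin (2 ^ m) => bits m i.val) := by
    rw [Fintype.bijective_iff_injective_and_card]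
    constructor
    · intro i j hij
      have hi := enc_bits m i.val i.isLt
      have hj := enc_bits m j.val j.isLt
      apply Fin.ext
      rw [← hi, ← hj]
      simp only [hij]
    · simp
  have sum2 : ∑ i ∈ Finset.range (2 ^ m), ph (2 ^ h) (F (bits m i)) * z ^ i
      = ∑ y : Fin m → ZMod 2, ph (2 ^ h) (F y) * z ^ (∑ v : Fin m, (y v).val * 2 ^ (v : ℕ)) := by
    rw [← Fin.sum_univ_eq_sum_range (fun i => ph (2 ^ h) (F (bits m i)) * z ^ i) (2 ^ m)]
    exact Fintype.sum_bijective _ hbits_bij _ _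
      (fun i => by rw [enc_bits m i.val i.isLt])
  -- step 3 : reindex by (d, u) and recognize the Golay-type sums
  have hΨbij : Function.Bijective
      (fun y : Fin m → ZMod 2 =>
        ((fun b => y (jJ b), fun α : Fin (m - k) => y (π (fun b => y (jJ b)) α.val)) :
          (Fin k → ZMod 2) × (Fin (m - k) → ZMod 2))) := by
    rw [Fintype.bijective_iff_injective_and_card]
    constructor
    · intro y y' hyy
      have h1 : (fun b => y (jJ b)) = (fun b => y' (jJ b)) := congrArg Prod.fst hyy
      have h2 := congrArg Prod.snd hyy
      simp only at h1 h2
      funext v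
      rcases hcover v with ⟨a, ha, rfl⟩ | ⟨b, rfl⟩
      · have hmem : iI a ∈ π (fun b => y (jJ b)) '' Set.Iio (m - k) := by
          rw [hπrange]; exact ⟨a, ha, rfl⟩
        obtain ⟨β, hβ, he⟩ := hmem
        have h3 := congrFun h2 ⟨β, Set.mem_Iio.1 hβ⟩
        simp only at h3
        rw [← h1] at h3
        rw [← he]
        exact h3
      · exact congrFun h1 b
    · simp only [Fintype.card_fun, Fintype.card_prod, ZMod.card, Fintype.card_fin]
      rw [← pow_add]
      congr 1
      omega
  have key : ∀ y : Fin m → ZMod 2,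
      ph (2 ^ h) (F y) * z ^ (∑ v : Fin m, (y v).val * 2 ^ (v : ℕ))
        = (fun p : (Fin k → ZMod 2) × (Fin (m - k) → ZMod 2) =>
            (ph (2 ^ h) (g' p.1) * z ^ (∑ b : Fin k, (p.1 b).val * 2 ^ ((jJ b : Fin m) : ℕ)))
              * (ph (2 ^ h) (((2 ^ (h - 1) * gQ (m - k) p.2 : ℕ) : ZMod (2 ^ h))
                    + ∑ j ∈ Finset.range (m - k),
                        ((uext (m - k) p.2 j : ZMod (2 ^ h)) * g (τ p.1 j) p.1))
                  * ∏ j ∈ Finset.range (m - k),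
                      (z ^ (2 ^ ((π p.1 j : Fin m) : ℕ))) ^ uext (m - k) p.2 j))
          ((fun b => y (jJ b), fun α : Fin (m - k) => y (π (fun b => y (jJ b)) α.val))) := by
    intro y
    dsimp only
    set d : Fin k → ZMod 2 := fun b => y (jJ b) with hd
    set u : Fin (m - k) → ZMod 2 := fun α : Fin (m - k) => y (π d α.val) with hu
    have huext : ∀ j, j < m - k → uext (m - k) u j = (y (π d j)).val := by
      intro j hj
      unfold uext
      rw [dif_pos hj]
    -- quadratic part
    have hquad : bFun h m k jJ π y = ((2 ^ (h - 1) * gQ (m - k) u : ℕ) : ZMod (2 ^ h)) := by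
      unfold bFun
      congr 2
      rw [Finset.sum_eq_single d]
      · have hind : (∏ b : Fin k,
            (y (jJ b)).val ^ (d b).val * (1 - (y (jJ b)).val) ^ (1 - (d b).val)) = 1 := by
          apply Finset.prod_eq_one
          intro b _
          have : ∀ w : ZMod 2, w.val ^ w.val * (1 - w.val) ^ (1 - w.val) = 1 := by decide
          exact this (y (jJ b))
        rw [hind, mul_one]
        unfold gQ
        apply Finset.sum_congr rfl
        intro α hα
        have hα1 : α < m - k - 1 := mem_range.1 hα
        rw [huext α (by omega), huext (α + 1) (by omega)]
      · intro d' _ hne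
        obtain ⟨b, hb⟩ := Function.ne_iff.mp hne
        apply mul_eq_zero_of_right
        apply Finset.prod_eq_zero (Finset.mem_univ b)
        have : ∀ w e : ZMod 2, e ≠ w → w.val ^ e.val * (1 - w.val) ^ (1 - e.val) = 0 := by
          decide
        exact this (y (jJ b)) (d' b) hb
      · intro hd'
        exact absurd (Finset.mem_univ d) hd'
    -- linear part
    have hlin : (∑ j ∈ Finset.range (m - k), ((uext (m - k) u j : ZMod (2 ^ h)) * g (τ d j) d))
        = ∑ α ∈ Finset.range (m - k), ((y (iI α)).val : ZMod (2 ^ h)) * g α d := by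
      apply Finset.sum_bij (fun (j : ℕ) (_ : j ∈ Finset.range (m - k)) => τ d j)
      · intro a ha; exact mem_range.2 (hτlt d a (mem_range.1 ha))
      · intro a ha b hb hab; exact hτinj d a ha b hb hab
      · exact hτsurj d
      · intro a ha
        rw [hτeq d a (mem_range.1 ha), huext a (mem_range.1 ha)]
    have haF : aFun h m k iI jJ g g' y
        = (∑ α ∈ Finset.range (m - k), ((y (iI α)).val : ZMod (2 ^ h)) * g α d) + g' d := rfl
    -- exponent of z
    have hJuniv : (univ : Finset (Fin m))
        = (Finset.image jJ univ) ∪ (Finset.image iI (Finset.range (m - k))) := by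
      apply Finset.ext
      intro v
      simp only [Finset.mem_univ, Finset.mem_union, Finset.mem_image, true_iff, mem_range]
      rcases hcover v with ⟨a, ha, rfl⟩ | ⟨b, rfl⟩
      · exact Or.inr ⟨a, ha, rfl⟩
      · exact Or.inl ⟨b, trivial, rfl⟩
    have hdisj2 : Disjoint (Finset.image jJ univ) (Finset.image iI (Finset.range (m - k))) := by
      rw [Finset.disjoint_left]
      rintro v hv1 hv2
      obtain ⟨b, _, rfl⟩ := Finset.mem_image.1 hv1
      obtain ⟨a, ha, he⟩ := Finset.mem_image.1 hv2
      exact hdisj a (mem_range.1 ha) b he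
    have henc : (∑ v : Fin m, (y v).val * 2 ^ (v : ℕ))
        = (∑ b : Fin k, (d b).val * 2 ^ ((jJ b : Fin m) : ℕ))
          + ∑ j ∈ Finset.range (m - k), uext (m - k) u j * 2 ^ ((π d j : Fin m) : ℕ) := by
      rw [show (∑ v : Fin m, (y v).val * 2 ^ (v : ℕ))
          = ∑ v ∈ (univ : Finset (Fin m)), (y v).val * 2 ^ (v : ℕ) from rfl]
      rw [hJuniv, Finset.sum_union hdisj2]
      congr 1
      · rw [Finset.sum_image (fun a _ b _ hab => hjInj hab)]
      · rw [Finset.sum_image (fun a ha b hb hab =>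
          hiInj (Set.mem_Iio.2 (mem_range.1 ha)) (Set.mem_Iio.2 (mem_range.1 hb)) hab)]
        symm
        apply Finset.sum_bij (fun (j : ℕ) (_ : j ∈ Finset.range (m - k)) => τ d j)
        · intro a ha; exact mem_range.2 (hτlt d a (mem_range.1 ha))
        · intro a ha b hb hab; exact hτinj d a ha b hb hab
        · exact hτsurj d
        · intro a ha
          rw [hτeq d a (mem_range.1 ha), huext a (mem_range.1 ha)]
    -- put it together
    have hexp : F y = g' d + (((2 ^ (h - 1) * gQ (m - k) u : ℕ) : ZMod (2 ^ h))
        + ∑ j ∈ Finset.range (m - k), ((uext (m - k) u j : ZMod (2 ^ h)) * g (τ d j) d)) := by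
      rw [hF]
      dsimp only
      rw [haF, hquad, hlin]
      ring
    rw [hexp, ph_add _ hq, henc, pow_add]
    rw [show (z ^ (∑ j ∈ Finset.range (m - k), uext (m - k) u j * 2 ^ ((π d j : Fin m) : ℕ)))
        = ∏ j ∈ Finset.range (m - k), (z ^ (2 ^ ((π d j : Fin m) : ℕ))) ^ uext (m - k) u j by
      rw [← Finset.prod_pow_eq_pow_sum]
      apply Finset.prod_congr rfl
      intro j _
      rw [← pow_mul, mul_comm]]
    ring
  have sum3 : ∑ y : Fin m → ZMod 2,
        ph (2 ^ h) (F y) * z ^ (∑ v : Fin m, (y v).val * 2 ^ (v : ℕ))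
      = ∑ d : Fin k → ZMod 2,
          (ph (2 ^ h) (g' d) * z ^ (∑ b : Fin k, (d b).val * 2 ^ ((jJ b : Fin m) : ℕ)))
            * S h (m - k) (fun j => z ^ (2 ^ ((π d j : Fin m) : ℕ))) (fun j => g (τ d j) d) := by
    have e := Fintype.sum_bijective _ hΨbij _
      (fun p : (Fin k → ZMod 2) × (Fin (m - k) → ZMod 2) =>
        (ph (2 ^ h) (g' p.1) * z ^ (∑ b : Fin k, (p.1 b).val * 2 ^ ((jJ b : Fin m) : ℕ)))
          * (ph (2 ^ h) (((2 ^ (h - 1) * gQ (m - k) p.2 : ℕ) : ZMod (2 ^ h))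
                + ∑ j ∈ Finset.range (m - k),
                    ((uext (m - k) p.2 j : ZMod (2 ^ h)) * g (τ p.1 j) p.1))
              * ∏ j ∈ Finset.range (m - k),
                  (z ^ (2 ^ ((π p.1 j : Fin m) : ℕ))) ^ uext (m - k) p.2 j)) key
    rw [e, Fintype.sum_prod_type]
    apply Finset.sum_congr rfl
    intro d _
    unfold S
    rw [Finset.mul_sum]
  -- assemble the estimate
  rw [sum1, sum2, sum3]
  rw [norm_mul, habsK, one_mul]
  have hbound : ‖∑ d : Fin k → ZMod 2,
        (ph (2 ^ h) (g' d) * z ^ (∑ b : Fin k, (d b).val * 2 ^ ((jJ b : Fin m) : ℕ)))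
          * S h (m - k) (fun j => z ^ (2 ^ ((π d j : Fin m) : ℕ))) (fun j => g (τ d j) d)‖
      ≤ (2 : ℝ) ^ k * Real.sqrt ((2 : ℝ) ^ (m - k + 1)) := by
    calc ‖_‖ ≤ ∑ d : Fin k → ZMod 2, ‖(ph (2 ^ h) (g' d) * z ^ (∑ b : Fin k, (d b).val * 2 ^ ((jJ b : Fin m) : ℕ)))
            * S h (m - k) (fun j => z ^ (2 ^ ((π d j : Fin m) : ℕ))) (fun j => g (τ d j) d)‖ :=
        norm_sum_le _ _
      _ ≤ ∑ _d : Fin k → ZMod 2, Real.sqrt ((2 : ℝ) ^ (m - k + 1)) := by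
        apply Finset.sum_le_sum
        intro d _
        rw [norm_mul, norm_mul, abs_ph, norm_pow, habsz, one_pow, one_mul, one_mul]
        exact golay_bound h hh (m - k) _ _
          (fun j => by rw [norm_pow, habsz, one_pow])
      _ = (2 : ℝ) ^ k * Real.sqrt ((2 : ℝ) ^ (m - k + 1)) := by
        rw [Finset.sum_const, Finset.card_univ, Fintype.card_fun, ZMod.card, Fintype.card_fin,
          nsmul_eq_mul]
        push_cast
        ring
  have hRnn : (0 : ℝ) ≤ (2 : ℝ) ^ k * Real.sqrt ((2 : ℝ) ^ (m - k + 1)) := by positivity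
  calc ‖_‖ ^ 2 ≤ ((2 : ℝ) ^ k * Real.sqrt ((2 : ℝ) ^ (m - k + 1))) ^ 2 :=
      pow_le_pow_left₀ (norm_nonneg _) hbound 2
    _ = (2 : ℝ) ^ k * (2 : ℝ) ^ k * (2 : ℝ) ^ (m - k + 1) := by
      rw [mul_pow, Real.sq_sqrt (by positivity)]
      ring
    _ = (2 : ℝ) ^ (k + 1) * (2 : ℝ) ^ m := by
      rw [← pow_add, ← pow_add, ← pow_add]
      congr 1
      omega
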